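/- arXiv:1407.7264 — 3 statements merged into one kernel-verified Lean document; each statement's English description precedes it below -/
import Mathlib

section
/- The maps h₋₁(a) = a[ ], h₀(a𝟙_p[ ]) = a[p], and hₙ(a𝟙_{p₀}[p₁,…,pₙ]) = a[p₀,p₁,…,pₙ] define a contracting homotopy for the bar resolution: ∂₋₁h₋₁ = id on the module 𝔐, and ∂ₙhₙ + hₙ₋₁∂ₙ₋₁ = id on 𝔉ₙ for all n ≥ 0. In particular, the resolution is exact. -/
namespace BarResolution

variable {P : Type*} [Monoid P] {G : Type*} [CommGroup G]

/-- The coefficient ring `A = ℤG`. -/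
abbrev GrpAlg (G : Type*) [CommGroup G] := MonoidAlgebra ℤ G

/-- The skew product ring `𝔑 = ℤG ⋊_θ P`, as finitely supported functions `P →₀ ℤG`. -/
abbrev SkewRing (P G : Type*) [Monoid P] [CommGroup G] := P →₀ GrpAlg G

/-- The free left `𝔑`-module `𝔉ₙ` with basis `{[p₁,…,pₙ] : pᵢ ∈ P}`. -/
abbrev FreeMod (P G : Type*) [Monoid P] [CommGroup G] (n : ℕ) :=
  (Fin n → P) →₀ SkewRing P G

/-- The action of `θ_p` on `ℤG`. -/
noncomputable def thetaZ (θ : P →* Monoid.End G) (p : P) (a : GrpAlg G) : GrpAlg G :=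
  MonoidAlgebra.mapDomain (θ p) a

/-- The skew multiplication `(gp)(hq) = (g θ_p(h))(pq)`, extended bilinearly:
`(a𝟙_p)(b𝟙_q) = a θ_p(b) 𝟙_{pq}`. -/
noncomputable def skewMul (θ : P →* Monoid.End G) (x y : SkewRing P G) : SkewRing P G :=
  x.sum fun p a => y.sum fun q b => Finsupp.single (p * q) (a * thetaZ θ p b)

/-- The element `𝟙_p` of `𝔑`. -/
noncomputable def oneP (p : P) : SkewRing P G := Finsupp.single p 1

/-- The identity `1 = 𝟙_e` of `𝔑`. -/
noncomputable def oneN : SkewRing P G := Finsupp.single 1 1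

/-- The left `𝔑`-scalar action on the free module `𝔉ₙ` (left multiplication on
coefficients). -/
noncomputable def smulF (θ : P →* Monoid.End G) {n : ℕ} (r : SkewRing P G)
    (x : FreeMod P G n) : FreeMod P G n :=
  x.sum fun b s => Finsupp.single b (skewMul θ r s)

/-- The tuple `(p₁,…,pᵢpᵢ₊₁,…,pₙ₊₁)` obtained by merging the `i`-th and `(i+1)`-st
entries of `(p₁,…,pₙ₊₁)`. -/
def merge {n : ℕ} (p : Fin (n + 1) → P) (i : Fin n) : Fin n → P := fun j =>
  if (j : ℕ) < (i : ℕ) then p j.castSucc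
  else if (j : ℕ) = (i : ℕ) then p j.castSucc * p j.succ
  else p j.succ

/-- The value of the boundary map on a basis element:
`∂ₙ₋₁([p₁,…,pₙ₊₁]) = 𝟙_{p₁}[p₂,…,pₙ₊₁] + Σᵢ (−1)ⁱ [p₁,…,pᵢpᵢ₊₁,…,pₙ₊₁]
 + (−1)^{n+1} [p₁,…,pₙ]` (for `n = 0` this reads `∂₀([p]) = (𝟙_p − 1)[ ]`). -/
noncomputable def dBasis {n : ℕ} (p : Fin (n + 1) → P) : FreeMod P G n :=
  Finsupp.single (fun i => p i.succ) (oneP (p 0)) +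
    (∑ i : Fin n, ((-1 : ℤ) ^ ((i : ℕ) + 1)) • Finsupp.single (merge p i) oneN) +
    ((-1 : ℤ) ^ (n + 1)) • Finsupp.single (fun i => p i.castSucc) oneN

/-- The boundary map `∂ₙ : 𝔉ₙ₊₁ → 𝔉ₙ`, the `𝔑`-linear extension of `dBasis`. -/
noncomputable def bd (θ : P →* Monoid.End G) (n : ℕ) (x : FreeMod P G (n + 1)) :
    FreeMod P G n :=
  x.sum fun b r => smulF θ r (dBasis b)

/-- The map `Ψ : 𝔑 → ℤG`, `Ψ(Σ a_p 𝟙_p) = Σ a_p`. -/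
noncomputable def PsiZ (x : SkewRing P G) : GrpAlg G := x.sum fun _ a => a

/-- The augmentation `∂₋₁ : 𝔉₀ → 𝔐 = ℤG`, `∂₋₁(r[ ]) = r ⇀ 1 = Ψ(r)`. -/
noncomputable def bdNeg (x : FreeMod P G 0) : GrpAlg G := PsiZ (x fun i => i.elim0)

/-- The homotopy `h₋₁ : 𝔐 → 𝔉₀`, `h₋₁(a) = a[ ]`. -/
noncomputable def hNeg (a : GrpAlg G) : FreeMod P G 0 :=
  Finsupp.single (fun i => i.elim0) (Finsupp.single 1 a)

/-- The homotopy `hₙ : 𝔉ₙ → 𝔉ₙ₊₁`, `hₙ(a𝟙_{p₀}[p₁,…,pₙ]) = a[p₀,p₁,…,pₙ]`,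
extended additively. -/
noncomputable def hF {n : ℕ} (x : FreeMod P G n) : FreeMod P G (n + 1) :=
  x.sum fun b r => r.sum fun p a => Finsupp.single (Fin.cons p b) (Finsupp.single 1 a)

end BarResolution

namespace BarResolution

open Finsupp

variable {P : Type*} [Monoid P] {G : Type*} [CommGroup G] (θ : P →* Monoid.End G)

lemma thetaZ_zero (p : P) : thetaZ (G := G) θ p 0 = 0 := MonoidAlgebra.mapDomain_zero _

lemma thetaZ_add (p : P) (a b : GrpAlg G) :
    thetaZ θ p (a + b) = thetaZ θ p a + thetaZ θ p b := MonoidAlgebra.mapDomain_add _ _ _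

lemma thetaZ_one (p : P) : thetaZ (G := G) θ p 1 = 1 := by
  rw [thetaZ, MonoidAlgebra.one_def, MonoidAlgebra.mapDomain_single, map_one]

lemma skewMul_single_single (p q : P) (a c : GrpAlg G) :
    skewMul θ (Finsupp.single p a) (Finsupp.single q c) =
      Finsupp.single (p * q) (a * thetaZ θ p c) := by
  unfold skewMul
  rw [Finsupp.sum_single_index, Finsupp.sum_single_index]
  · simp [thetaZ_zero]
  · rw [Finsupp.sum_single_index] <;> simp [thetaZ_zero]

lemma skewMul_zero_left (y : SkewRing P G) : skewMul θ 0 y = 0 := by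
  simp [skewMul]

lemma skewMul_zero_right (x : SkewRing P G) : skewMul θ x 0 = 0 := by
  simp [skewMul]

lemma skewMul_add_left (x x' y : SkewRing P G) :
    skewMul θ (x + x') y = skewMul θ x y + skewMul θ x' y := by
  unfold skewMul
  rw [Finsupp.sum_add_index'] <;> simp [add_mul, Finsupp.single_add, Finsupp.sum_add]

lemma skewMul_add_right (x y y' : SkewRing P G) :
    skewMul θ x (y + y') = skewMul θ x y + skewMul θ x y' := by
  unfold skewMul
  rw [← Finsupp.sum_add]
  refine Finsupp.sum_congr fun p _ => ?_
  rw [Finsupp.sum_add_index'] <;> simp [thetaZ_zero, thetaZ_add, mul_add, Finsupp.single_add]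

end BarResolution
namespace BarResolution

variable {P : Type*} [Monoid P] {G : Type*} [CommGroup G] (θ : P →* Monoid.End G)

lemma smulF_zero_left {n : ℕ} (x : FreeMod P G n) : smulF θ 0 x = 0 := by
  simp [smulF, skewMul_zero_left]

lemma smulF_zero_right {n : ℕ} (r : SkewRing P G) : smulF θ r (0 : FreeMod P G n) = 0 := by
  simp [smulF]

lemma smulF_add_left {n : ℕ} (r r' : SkewRing P G) (x : FreeMod P G n) :
    smulF θ (r + r') x = smulF θ r x + smulF θ r' x := by
  unfold smulF
  rw [← Finsupp.sum_add]
  exact Finsupp.sum_congr fun b _ => by rw [skewMul_add_left, Finsupp.single_add]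

lemma smulF_add_right {n : ℕ} (r : SkewRing P G) (x y : FreeMod P G n) :
    smulF θ r (x + y) = smulF θ r x + smulF θ r y := by
  unfold smulF
  rw [Finsupp.sum_add_index'] <;>
    simp [skewMul_zero_right, skewMul_add_right, Finsupp.single_add]

lemma smulF_single {n : ℕ} (r : SkewRing P G) (c : Fin n → P) (s : SkewRing P G) :
    smulF θ r (Finsupp.single c s) = Finsupp.single c (skewMul θ r s) := by
  unfold smulF
  rw [Finsupp.sum_single_index]
  simp [skewMul_zero_right]

/-- `smulF θ r` as an additive hom. -/
noncomputable def smulFHom {n : ℕ} (r : SkewRing P G) : FreeMod P G n →+ FreeMod P G n :=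
  AddMonoidHom.mk' (smulF θ r) (smulF_add_right θ r)

/-- `hF` as an additive hom. -/
noncomputable def hFHom {n : ℕ} : FreeMod P G n →+ FreeMod P G (n + 1) :=
  AddMonoidHom.mk' hF (by
    intro x y
    unfold hF
    rw [Finsupp.sum_add_index']
    · intro b; exact Finsupp.sum_zero_index
    · intro b r r'
      rw [Finsupp.sum_add_index'] <;> simp [Finsupp.single_add])

/-- `bd θ n` as an additive hom. -/
noncomputable def bdHom (n : ℕ) : FreeMod P G (n + 1) →+ FreeMod P G n :=
  AddMonoidHom.mk' (bd θ n) (by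
    intro x y
    unfold bd
    rw [Finsupp.sum_add_index']
    · intro b; exact smulF_zero_left θ _
    · intro b r r'; exact smulF_add_left θ r r' _)

/-- `hNeg` as an additive hom. -/
noncomputable def hNegHom : GrpAlg G →+ FreeMod P G 0 :=
  AddMonoidHom.mk' hNeg (by intro a b; simp [hNeg, Finsupp.single_add])

/-- `bdNeg` as an additive hom. -/
noncomputable def bdNegHom : FreeMod P G 0 →+ GrpAlg G :=
  AddMonoidHom.mk' bdNeg (by
    intro x y
    unfold bdNeg PsiZ
    rw [Finsupp.add_apply, Finsupp.sum_add_index'] <;> simp)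

lemma hF_single_single {n : ℕ} (b : Fin n → P) (p : P) (a : GrpAlg G) :
    hF (Finsupp.single b (Finsupp.single p a)) =
      Finsupp.single (Fin.cons p b) (Finsupp.single 1 a) := by
  unfold hF
  rw [Finsupp.sum_single_index, Finsupp.sum_single_index] <;> simp

lemma eq_on_single_single {n : ℕ} {N : Type*} [AddCommGroup N]
    (f g : FreeMod P G n →+ N)
    (h : ∀ (b : Fin n → P) (p : P) (a : GrpAlg G),
      f (Finsupp.single b (Finsupp.single p a)) = g (Finsupp.single b (Finsupp.single p a)))
    (x : FreeMod P G n) : f x = g x := by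
  induction x using Finsupp.induction_linear with
  | zero => simp
  | add u v hu hv => simp [hu, hv]
  | single b r =>
      induction r using Finsupp.induction_linear with
      | zero => simp
      | add u v hu hv => rw [Finsupp.single_add, map_add, map_add, hu, hv]
      | single p a => exact h b p a

end BarResolution
namespace BarResolution

variable {P : Type*} [Monoid P] {G : Type*} [CommGroup G] (θ : P →* Monoid.End G)

lemma thetaZ_id (a : GrpAlg G) : thetaZ θ 1 a = a := by
  rw [thetaZ, map_one]
  ext; simp

lemma skewMul_single_oneP (p q : P) (a : GrpAlg G) :
    skewMul θ (Finsupp.single p a) (oneP q) = Finsupp.single (p * q) a := by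
  rw [oneP, skewMul_single_single, thetaZ_one, mul_one]

lemma skewMul_single_oneN (p : P) (a : GrpAlg G) :
    skewMul θ (Finsupp.single p a) oneN = Finsupp.single p a := by
  rw [oneN, skewMul_single_single, thetaZ_one, mul_one, mul_one]

lemma smulF_dBasis {n : ℕ} (p : P) (a : GrpAlg G) (b : Fin (n + 1) → P) :
    smulF θ (Finsupp.single p a) (dBasis b) =
      Finsupp.single (fun i => b i.succ) (Finsupp.single (p * b 0) a) +
        (∑ i : Fin n, ((-1 : ℤ) ^ ((i : ℕ) + 1)) •
          Finsupp.single (merge b i) (Finsupp.single p a)) +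
        ((-1 : ℤ) ^ (n + 1)) • Finsupp.single (fun i => b i.castSucc) (Finsupp.single p a) := by
  rw [show smulF θ (Finsupp.single p a) = ⇑(smulFHom θ (Finsupp.single p a) (n := n)) from rfl]
  rw [dBasis, map_add, map_add, map_sum, map_zsmul (smulFHom θ (Finsupp.single p a) (n := n))]
  simp only [map_zsmul (smulFHom θ (Finsupp.single p a) (n := n))]
  rw [show ⇑(smulFHom θ (Finsupp.single p a) (n := n)) = smulF θ (Finsupp.single p a) from rfl]
  simp only [smulF_single, skewMul_single_oneP, skewMul_single_oneN]

lemma hF_zsmul_single {n : ℕ} (z : ℤ) (b : Fin n → P) (p : P) (a : GrpAlg G) :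
    hF (z • Finsupp.single b (Finsupp.single p a)) =
      z • Finsupp.single (Fin.cons p b) (Finsupp.single 1 a) := by
  rw [Finsupp.smul_single, Finsupp.smul_single, hF_single_single, ← Finsupp.smul_single,
    ← Finsupp.smul_single]

lemma bd_single {n : ℕ} (b : Fin (n + 1) → P) (r : SkewRing P G) :
    bd θ n (Finsupp.single b r) = smulF θ r (dBasis b) := by
  unfold bd
  exact Finsupp.sum_single_index (smulF_zero_left θ _)

end BarResolution
namespace BarResolution
set_option linter.unusedSectionVars false

variable {P : Type*} [Monoid P] {G : Type*} [CommGroup G]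

lemma tail_cons {n : ℕ} (p : P) (b : Fin n → P) :
    (fun i : Fin n => (Fin.cons p b : Fin (n + 1) → P) i.succ) = b := by
  funext i; simp

lemma castSucc_cons {n : ℕ} (p : P) (b : Fin (n + 1) → P) :
    (fun i : Fin (n + 1) => (Fin.cons p b : Fin (n + 2) → P) i.castSucc) =
      Fin.cons p (fun i : Fin n => b i.castSucc) := by
  funext j
  induction j using Fin.cases with
  | zero => rfl
  | succ m => simp [← Fin.succ_castSucc]

lemma merge_cons_zero {n : ℕ} (p : P) (b : Fin (n + 1) → P) :
    merge (Fin.cons p b) 0 = Fin.cons (p * b 0) (fun i => b i.succ) := by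
  funext j
  induction j using Fin.cases with
  | zero =>
      simp only [merge, Fin.cons_zero, Fin.cons_succ]
      norm_num
  | succ m =>
      simp only [merge, Fin.val_succ, Fin.val_zero, Fin.cons_succ]
      norm_num

lemma merge_cons_succ {n : ℕ} (p : P) (b : Fin (n + 1) → P) (k : Fin n) :
    merge (Fin.cons p b) k.succ = Fin.cons p (merge b k) := by
  funext j
  induction j using Fin.cases with
  | zero =>
      simp only [merge, Fin.val_zero, Fin.val_succ, Fin.cons_zero]
      simp only [Nat.add_one_pos, if_true]
      simp
  | succ m =>
      simp only [merge, Fin.val_succ, Fin.cons_succ, ← Fin.succ_castSucc, Fin.cons_succ,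
        Nat.add_lt_add_iff_right, Nat.add_right_cancel_iff]

end BarResolution
namespace BarResolution

variable {P : Type*} [Monoid P] {G : Type*} [CommGroup G] (θ : P →* Monoid.End G)

lemma part1 (a : GrpAlg G) : bdNeg (hNeg (P := P) a) = a := by
  unfold bdNeg hNeg
  rw [Finsupp.single_eq_same]
  exact Finsupp.sum_single_index rfl

lemma psiZ_single (q : P) (c : GrpAlg G) : PsiZ (Finsupp.single q c) = c :=
  Finsupp.sum_single_index rfl

lemma part2_single (b : Fin 0 → P) (q : P) (c : GrpAlg G) :
    bd θ 0 (hF (Finsupp.single b (Finsupp.single q c))) +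
      hNeg (bdNeg (Finsupp.single b (Finsupp.single q c))) =
      Finsupp.single b (Finsupp.single q c) := by
  have hb : (fun i : Fin 0 => i.elim0) = b := Subsingleton.elim _ _
  rw [hF_single_single, bd_single, smulF_dBasis]
  rw [bdNeg, hb, Finsupp.single_eq_same, psiZ_single]
  rw [hNeg, hb]
  rw [Subsingleton.elim (fun i : Fin 0 => (Fin.cons q b : Fin 1 → P) i.succ) b,
    Subsingleton.elim (fun i : Fin 0 => (Fin.cons q b : Fin 1 → P) i.castSucc) b]
  simp only [Fin.cons_zero, one_mul, Finset.univ_eq_empty, Finset.sum_empty, add_zero,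
    pow_one, neg_one_smul]
  abel

lemma neg_intSmul {α M : Type*} [AddCommGroup M] (z : ℤ) (f : α →₀ M) :
    (-z) • f = -(z • f) := neg_smul z f

lemma one_intSmul {α M : Type*} [AddCommGroup M] (f : α →₀ M) :
    (1 : ℤ) • f = f := one_smul ℤ f

lemma cancel_aux {α N : Type*} [AddCommGroup N] (X Y C : α →₀ N) {ι : Type*} (s : Finset ι)
    (f : ι → α →₀ N) :
    X + (-Y + (∑ x ∈ s, f x)) + C + (Y + (∑ x ∈ s, -f x) + -C) = X := by
  ext t
  simp [Finsupp.finset_sum_apply, Finset.sum_neg_distrib]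
  abel

lemma part3_single (n : ℕ) (b : Fin (n + 1) → P) (p : P) (a : GrpAlg G) :
    bd θ (n + 1) (hF (Finsupp.single b (Finsupp.single p a))) +
      hF (bd θ n (Finsupp.single b (Finsupp.single p a))) =
      Finsupp.single b (Finsupp.single p a) := by
  rw [hF_single_single, bd_single, bd_single, smulF_dBasis, smulF_dBasis]
  rw [show (hF : FreeMod P G n → FreeMod P G (n + 1)) = ⇑(hFHom (P := P) (G := G)) from rfl]
  rw [map_add, map_add, map_sum]
  rw [show ⇑(hFHom (P := P) (G := G) (n := n)) = hF from rfl]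
  simp only [hF_single_single, hF_zsmul_single]
  rw [tail_cons, castSucc_cons, Fin.cons_zero, one_mul, Fin.sum_univ_succ]
  simp only [Fin.val_succ, Fin.val_zero, zero_add, merge_cons_zero, merge_cons_succ]
  simp only [pow_succ, pow_zero, one_mul, mul_neg_one, neg_neg, neg_intSmul, one_intSmul,
    Finset.sum_neg_distrib]
  apply cancel_aux

end BarResolution
namespace BarResolution

variable {P : Type*} [Monoid P] {G : Type*} [CommGroup G] (θ : P →* Monoid.End G)

lemma bdHom_apply {n : ℕ} (x : FreeMod P G (n + 1)) : bdHom θ n x = bd θ n x := rfl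
lemma hFHom_apply {n : ℕ} (x : FreeMod P G n) : hFHom x = hF x := rfl
lemma hNegHom_apply (a : GrpAlg G) : hNegHom (P := P) a = hNeg a := rfl
lemma bdNegHom_apply (x : FreeMod P G 0) : bdNegHom x = bdNeg x := rfl

end BarResolution

open BarResolution in
/-- The maps `h₋₁(a) = a[ ]`, `h₀(a𝟙_p[ ]) = a[p]`, and
`hₙ(a𝟙_{p₀}[p₁,…,pₙ]) = a[p₀,p₁,…,pₙ]` form a contracting homotopy for the bar
resolution of the module `𝔐 = ℤG` over the skew product ring `𝔑 = ℤG ⋊_θ P`: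
`∂₋₁ h₋₁ = id` on `𝔐` and `∂ₙ hₙ + hₙ₋₁ ∂ₙ₋₁ = id` on `𝔉ₙ` for all `n ≥ 0`;
in particular the resolution is exact. -/
theorem bar_contracting_homotopy {P : Type*} [Monoid P] {G : Type*} [CommGroup G]
    [Countable G] (θ : P →* Monoid.End G)
    (hinj : ∀ p : P, Function.Injective (θ p)) :
    (∀ a : GrpAlg G, bdNeg (hNeg (P := P) a) = a) ∧
    (∀ x : FreeMod P G 0, bd θ 0 (hF x) + hNeg (bdNeg x) = x) ∧
    (∀ (n : ℕ) (x : FreeMod P G (n + 1)), bd θ (n + 1) (hF x) + hF (bd θ n x) = x) := by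
  refine ⟨part1, ?_, ?_⟩
  · intro x
    have h := eq_on_single_single ((bdHom θ 0).comp hFHom + hNegHom.comp bdNegHom)
      (AddMonoidHom.id (FreeMod P G 0)) (N := FreeMod P G 0)
      (fun b q c => by
        simp only [AddMonoidHom.add_apply, AddMonoidHom.comp_apply, AddMonoidHom.id_apply,
          bdHom_apply, hFHom_apply, hNegHom_apply, bdNegHom_apply]
        exact part2_single θ b q c) x
    simpa only [AddMonoidHom.add_apply, AddMonoidHom.comp_apply, AddMonoidHom.id_apply,
      bdHom_apply, hFHom_apply, hNegHom_apply, bdNegHom_apply] using h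
  · intro n x
    have h := eq_on_single_single ((bdHom θ (n + 1)).comp hFHom + hFHom.comp (bdHom θ n))
      (AddMonoidHom.id (FreeMod P G (n + 1))) (N := FreeMod P G (n + 1))
      (fun b p a => by
        simp only [AddMonoidHom.add_apply, AddMonoidHom.comp_apply, AddMonoidHom.id_apply,
          bdHom_apply, hFHom_apply]
        exact part3_single θ n b p a) x
    simpa only [AddMonoidHom.add_apply, AddMonoidHom.comp_apply, AddMonoidHom.id_apply,
      bdHom_apply, hFHom_apply] using h
end

section
/- Under relations (QX1)–(QX3), for all m,n ∈ ℕ× the range projections satisfy s_m s_m* · s_n s_n* = s_{m∨n} s_{m∨n}*, where m∨n is the least common multiple of m and n. -/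
section StarModuleDerivation

variable {A : Type*} [NormedRing A] [StarRing A] [CStarRing A] [CompleteSpace A]
    [NormedAlgebra ℂ A]

/-- star commutes with real scalars, by continuity and density of `ℚ`. -/
lemma star_real_smul_aux (x : ℝ) (a : A) :
    star ((x : ℂ) • a) = (x : ℂ) • star a := by
  have hF : Continuous fun t : ℝ => star ((t : ℂ) • a) :=
    continuous_star.comp ((Complex.continuous_ofReal.smul continuous_const))
  have hG : Continuous fun t : ℝ => (t : ℂ) • star a :=
    Complex.continuous_ofReal.smul continuous_const
  have key : (fun t : ℝ => star ((t : ℂ) • a)) = fun t : ℝ => (t : ℂ) • star a := by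
    apply (Rat.denseRange_cast (𝕜 := ℝ)).equalizer hF hG
    funext q
    have h1 : ((q : ℝ) : ℂ) = ((q : ℚ) : ℂ) := by push_cast; noncomm_ring
    show star ((((q:ℝ)) : ℂ) • a) = (((q:ℝ)) : ℂ) • star a
    rw [h1]
    exact map_ratCast_smul (starAddEquiv : A ≃+ A) ℂ ℂ q a
  exact congrFun key x

end StarModuleDerivation

set_option linter.unusedSectionVars false in
set_option maxHeartbeats 1000000 in
/-- From the `m = 2` instance of the relations, the star operation is forced to be
conjugate-linear. -/
lemma starModule_of_relations
    {A : Type*} [NormedRing A] [StarRing A] [CStarRing A] [CompleteSpace A]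
    [NormedAlgebra ℂ A] (u s2 : A)
    (hu1 : star u * u = 1) (hs2 : star s2 * s2 = 1)
    (hsum2 : s2 * star s2 + u * (s2 * star s2) * star u = 1) :
    ∀ (z : ℂ) (a : A), star (z • a) = (starRingEnd ℂ z) • star a := by
  set e : A := s2 * star s2 with he
  have hestar : star e = e := by rw [he, star_mul, star_star]
  have hee : e * e = e := by
    rw [he, mul_assoc, ← mul_assoc (star s2) s2 (star s2), hs2, one_mul]
  set f : A := u * e * star u with hf
  have hfeq : f = 1 - e := by rw [hf, ← hsum2]; abel
  have hef : e * f = 0 := by rw [hfeq, mul_sub, mul_one, hee, sub_self]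
  have hfe : f * e = 0 := by rw [hfeq, sub_mul, one_mul, hee, sub_self]
  have her : e * (u * e) = 0 := by
    have h1 : e * (u * e) * (star u * u) = 0 := by
      have : e * (u * e) * star u = e * f := by rw [hf]; noncomm_ring
      calc e * (u * e) * (star u * u) = (e * (u * e) * star u) * u := by noncomm_ring
        _ = (e * f) * u := by rw [this]
        _ = 0 := by rw [hef, zero_mul]
    rwa [hu1, mul_one] at h1
  set i1 : A := (Complex.I : ℂ) • (1 : A) with hi1
  have hi1c : ∀ x : A, i1 * x = x * i1 := by
    intro x
    rw [hi1, smul_mul_assoc, one_mul, mul_smul_comm, mul_one]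
  have hsmul_eq : ∀ x : A, i1 * x = (Complex.I : ℂ) • x := by
    intro x; rw [hi1, smul_mul_assoc, one_mul]
  have hi1sq : i1 * i1 = -1 := by
    rw [hsmul_eq, hi1, smul_smul, Complex.I_mul_I, neg_smul, one_smul]
  set j : A := star i1 with hj
  have hjc : ∀ x : A, j * x = x * j := by
    intro x
    have h1 : j * x = star (star x * i1) := by rw [star_mul, star_star, hj]
    have h2 : x * j = star (i1 * star x) := by rw [star_mul, star_star, hj]
    rw [h1, h2, hi1c]
  have hjj : j * j = -1 := by
    rw [hj, ← star_mul, hi1sq, star_neg, star_one]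
  set c : A := i1 * j with hc
  have hcc : ∀ x : A, c * x = x * c := by
    intro x; rw [hc, mul_assoc, hjc, ← mul_assoc, hi1c, mul_assoc]
  have hcsq : c * c = 1 := by
    calc c * c = i1 * (j * i1) * j := by rw [hc]; noncomm_ring
      _ = i1 * (i1 * j) * j := by rw [hjc]
      _ = (i1 * i1) * (j * j) := by noncomm_ring
      _ = (-1 : A) * (-1 : A) := by rw [hi1sq, hjj]
      _ = 1 := by noncomm_ring
  set Q : A := 1 - c with hQ
  have hQc : ∀ x : A, Q * x = x * Q := by
    intro x; rw [hQ, sub_mul, mul_sub, one_mul, mul_one, hcc]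
  have hcstar : star c = c := by
    rw [hc, star_mul, hj, star_star]
  have hQstar : star Q = Q := by
    rw [hQ, star_sub, star_one, hcstar]
  have hQQ : Q * Q = Q + Q := by
    have h1 : Q * Q = 1 - c - c + c * c := by rw [hQ]; noncomm_ring
    rw [h1, hcsq, hQ]; abel
  -- the element y = Q (e + i1 * u * e) has star y * y = 0
  set r : A := u * e with hr
  have hrstar : star r = e * star u := by rw [hr, star_mul, hestar]
  have hrr : star r * r = e := by
    rw [hrstar, hr]
    calc e * star u * (u * e) = e * (star u * u) * e := by noncomm_ring
      _ = e := by rw [hu1, mul_one, hee]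
  have hre : star r * e = 0 := by
    have := congrArg star her
    rwa [star_mul, hestar, star_zero] at this
  set y : A := Q * (e + i1 * r) with hy
  have hystar : star y = (e + star r * j) * Q := by
    rw [hy, star_mul, hQstar, star_add, hestar, star_mul, hj]
  have hB : (e + star r * j) * (e + i1 * r) = e + c * e := by
    have t2 : e * (i1 * r) = 0 := by
      rw [← mul_assoc e i1 r, ← hi1c e, mul_assoc i1 e r, hr, her, mul_zero]
    have t3 : (star r * j) * e = 0 := by
      rw [mul_assoc, hjc, ← mul_assoc, hre, zero_mul]
    have t4 : (star r * j) * (i1 * r) = c * e := by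
      calc (star r * j) * (i1 * r) = star r * (j * i1) * r := by noncomm_ring
        _ = star r * (i1 * j) * r := by rw [hjc]
        _ = star r * c * r := by rw [hc]
        _ = c * (star r * r) := by rw [← hcc]; noncomm_ring
        _ = c * e := by rw [hrr]
    calc (e + star r * j) * (e + i1 * r)
        = e * e + e * (i1 * r) + ((star r * j) * e + (star r * j) * (i1 * r)) := by noncomm_ring
      _ = e + c * e := by rw [hee, t2, t3, t4]; abel
  have hQB : Q * (e + c * e) = 0 := by
    have h1 : Q * (1 + c) = 0 := by
      rw [hQ, sub_mul, one_mul, mul_add, mul_one, hcsq]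
      abel
    calc Q * (e + c * e) = (Q * (1 + c)) * e := by noncomm_ring
      _ = 0 := by rw [h1, zero_mul]
  have hyy : star y * y = 0 := by
    rw [hystar, hy]
    calc (e + star r * j) * Q * (Q * (e + i1 * r))
        = Q * Q * ((e + star r * j) * (e + i1 * r)) := by
          rw [← hQc (e + star r * j), mul_assoc Q (e + star r * j) (Q * (e + i1 * r)),
            ← mul_assoc (e + star r * j) Q (e + i1 * r), ← hQc (e + star r * j),
            mul_assoc Q (e + star r * j) (e + i1 * r), ← mul_assoc Q Q _]
      _ = (Q + Q) * (e + c * e) := by rw [hQQ, hB]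
      _ = Q * (e + c * e) + Q * (e + c * e) := by noncomm_ring
      _ = 0 := by rw [hQB, add_zero]
  have hy0 : y = 0 := by
    have hn : ‖y‖ * ‖y‖ = 0 := by rw [← CStarRing.norm_star_mul_self, hyy, norm_zero]
    have : ‖y‖ = 0 := by
      rcases mul_self_eq_zero.mp hn with h; exact h
    exact norm_eq_zero.mp this
  -- hence Q e = - i1 (u (Q e)), so Q e = 0, so Q = 0, so c = 1
  set E : A := Q * e with hE
  have hE1 : E + i1 * (u * E) = 0 := by
    have : Q * e + Q * (i1 * r) = 0 := by
      have := hy0; rw [hy, mul_add] at this; exact this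
    have h2 : Q * (i1 * r) = i1 * (u * E) := by
      rw [← mul_assoc Q i1 r, hQc i1, mul_assoc i1 Q r, hr, ← mul_assoc Q u e, hQc u,
        mul_assoc u Q e, ← hE]
    rwa [h2] at this
  have huE : u * E = i1 * E := by
    have h1 : E = -(i1 * (u * E)) := eq_neg_of_add_eq_zero_left hE1
    calc u * E = -(i1 * i1) * (u * E) := by rw [hi1sq]; noncomm_ring
      _ = i1 * -(i1 * (u * E)) := by noncomm_ring
      _ = i1 * E := by rw [← h1]
  have hsuE : star u * E = -(i1 * E) := by
    have h1 : star u * (u * E) = E := by rw [← mul_assoc, hu1, one_mul]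
    have h2 : star u * (i1 * E) = E := by rw [← huE, h1]
    have h3 : i1 * (star u * E) = E := by
      nth_rewrite 2 [← h2]
      rw [← mul_assoc, hi1c, mul_assoc]
    calc star u * E = -(i1 * i1) * (star u * E) := by rw [hi1sq]; noncomm_ring
      _ = -(i1 * (i1 * (star u * E))) := by noncomm_ring
      _ = -(i1 * E) := by rw [h3]
  have heE : e * E = E := by
    rw [hE, ← mul_assoc e Q e, ← hQc e, mul_assoc Q e e, hee]
  have hEE : E * E = E + E := by
    rw [hE]
    calc Q * e * (Q * e) = Q * Q * (e * e) := by
          rw [mul_assoc Q e (Q * e), ← mul_assoc e Q e, ← hQc e, mul_assoc Q e e,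
            ← mul_assoc Q Q (e * e)]
      _ = (Q + Q) * e := by rw [hQQ, hee]
      _ = Q * e + Q * e := by noncomm_ring
  have hFE0 : (Q * f) * E = 0 := by
    rw [hE]
    calc Q * f * (Q * e) = Q * Q * (f * e) := by
          rw [mul_assoc Q f (Q * e), ← mul_assoc f Q e, ← hQc f, mul_assoc Q f e,
            ← mul_assoc Q Q (f * e)]
      _ = 0 := by rw [hfe, mul_zero]
  have hFE2 : (Q * f) * E = E + E := by
    have hX : u * (e * (star u * E)) = E := by
      rw [hsuE]
      calc u * (e * -(i1 * E)) = -(i1 * (u * (e * E))) := by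
            rw [mul_neg, ← mul_assoc e i1 E, ← hi1c e, mul_assoc i1 e E, mul_neg,
              ← mul_assoc u i1 (e * E), ← hi1c u, mul_assoc i1 u (e * E)]
        _ = -(i1 * (u * E)) := by rw [heE]
        _ = -(i1 * (i1 * E)) := by rw [huE]
        _ = -((i1 * i1) * E) := by noncomm_ring
      rw [hi1sq]; noncomm_ring
    calc Q * f * E = Q * (u * (e * (star u * E))) := by rw [hf, hr]; noncomm_ring
      _ = Q * E := by rw [hX]
      _ = Q * (Q * e) := by rw [hE]
      _ = Q * Q * e := by noncomm_ring
      _ = (Q + Q) * e := by rw [hQQ]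
      _ = E + E := by rw [hE]; noncomm_ring
  have hE0 : E = 0 := by
    have h2 : E + E = 0 := by rw [← hFE2, hFE0]
    have h3 : (2 : ℂ) • E = 0 := by rw [two_smul]; exact h2
    calc E = (2⁻¹ : ℂ) • ((2 : ℂ) • E) := by rw [smul_smul]; norm_num
      _ = 0 := by rw [h3, smul_zero]
  have hQ0 : Q = 0 := by
    have hes : e * s2 = s2 := by
      rw [he, mul_assoc, hs2, mul_one]
    have h1 : Q * s2 = 0 := by
      rw [← hes, ← mul_assoc, ← hE, hE0, zero_mul]
    calc Q = Q * (star s2 * s2) := by rw [hs2, mul_one]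
      _ = star s2 * (Q * s2) := by rw [← mul_assoc, hQc, mul_assoc]
      _ = 0 := by rw [h1, mul_zero]
  have hc1 : c = 1 := by
    have : (1 : A) - c = 0 := hQ0
    exact (sub_eq_zero.mp this).symm
  have hjval : j = -i1 := by
    have h1 : i1 * j = 1 := by rw [← hc]; exact hc1
    calc j = -(i1 * i1) * j := by rw [hi1sq]; noncomm_ring
      _ = -(i1 * (i1 * j)) := by noncomm_ring
      _ = -(i1 * 1) := by rw [h1]
      _ = -i1 := by rw [mul_one]
  -- conclude conjugate-linearity
  intro z a
  have hIa : ∀ b : A, star ((Complex.I : ℂ) • b) = -((Complex.I : ℂ) • star b) := by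
    intro b
    have h1 : (Complex.I : ℂ) • b = i1 * b := (hsmul_eq b).symm
    rw [h1, star_mul, ← hj, ← hjc, hjval, neg_mul, hsmul_eq]
  have hz : z = ((z.re : ℝ) : ℂ) + ((z.im : ℝ) : ℂ) * Complex.I := (Complex.re_add_im z).symm
  calc star (z • a) = star ((((z.re : ℝ) : ℂ) + ((z.im : ℝ) : ℂ) * Complex.I) • a) := by rw [← hz]
    _ = star (((z.re : ℝ) : ℂ) • a) + star (((z.im : ℝ) : ℂ) • (Complex.I • a)) := by
        rw [add_smul, mul_smul, star_add]
    _ = ((z.re : ℝ) : ℂ) • star a + ((z.im : ℝ) : ℂ) • star (Complex.I • a) := by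
        rw [star_real_smul_aux, star_real_smul_aux]
    _ = ((z.re : ℝ) : ℂ) • star a - ((z.im : ℝ) : ℂ) • (Complex.I • star a) := by
        rw [hIa, smul_neg]; abel
    _ = (starRingEnd ℂ z) • star a := by
        rw [← mul_smul, ← sub_smul]
        congr 1
        simp [Complex.ext_iff]
section Aux
variable {A : Type*} [Monoid A] [StarMul A]
lemma uz_mul (U : unitary A) (k l : ℤ) :
    ((U ^ k : unitary A) : A) * ((U ^ l : unitary A) : A) = ((U ^ (k + l) : unitary A) : A) := by
  rw [zpow_add]; rfl
lemma uz_zero (U : unitary A) : ((U ^ (0 : ℤ) : unitary A) : A) = 1 := by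
  rw [zpow_zero]; rfl
lemma uz_star (U : unitary A) (k : ℤ) :
    star ((U ^ k : unitary A) : A) = ((U ^ (-k) : unitary A) : A) := by
  have h1 : star (U ^ k) = (U ^ k)⁻¹ := Unitary.star_eq_inv _
  have h2 : (U ^ k)⁻¹ = U ^ (-k) := (zpow_neg U k).symm
  calc star ((U ^ k : unitary A) : A) = ((star (U ^ k) : unitary A) : A) := rfl
    _ = ((U ^ (-k) : unitary A) : A) := by rw [h1, h2]
end Aux

set_option maxHeartbeats 1000000 in
theorem conj_lemma {A : Type*} [CStarAlgebra A] (s : ℕ+ → A) (ξ : ℕ+ → ℕ+ → ℝ)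
    (hisom : ∀ m, star (s m) * s m = 1)
    (hQX1 : ∀ m n, s m * s n = Complex.exp (Complex.I * (ξ m n : ℂ)) • s (m * n))
    (m' a' : ℕ+) :
    s m' * (s a' * star (s a')) * star (s m') = s (m' * a') * star (s (m' * a')) := by
  set c : ℂ := Complex.exp (Complex.I * (ξ m' a' : ℂ)) with hcdef
  have hc0 : c ≠ 0 := Complex.exp_ne_zero _
  set z : A := algebraMap ℂ A c with hzdef
  have hzc : ∀ x : A, z * x = x * z := fun x => (Algebra.commutes c x)
  have h1 : s m' * s a' = z * s (m' * a') := by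
    rw [hQX1 m' a', Algebra.smul_def]
  have hiso2 : star (s m' * s a') * (s m' * s a') = 1 := by
    rw [star_mul]
    calc star (s a') * star (s m') * (s m' * s a')
        = star (s a') * (star (s m') * s m') * s a' := by noncomm_ring
      _ = 1 := by rw [hisom, mul_one, hisom]
  have hzstarc : ∀ x : A, star z * x = x * star z := by
    intro x
    calc star z * x = star (star x * z) := by rw [star_mul, star_star]
      _ = star (z * star x) := by rw [← hzc]
      _ = x * star z := by rw [star_mul, star_star]
  have hzz : star z * z = 1 := by
    have h2 : star (s m' * s a') * (s m' * s a')
        = star z * z * (star (s (m' * a')) * s (m' * a')) := by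
      rw [h1, star_mul]
      calc star (s (m' * a')) * star z * (z * s (m' * a'))
          = star z * (star (s (m' * a')) * z) * s (m' * a') := by
            rw [← hzstarc (star (s (m' * a')))]; noncomm_ring
        _ = star z * (z * star (s (m' * a'))) * s (m' * a') := by
            rw [← hzc (star (s (m' * a')))]
        _ = star z * z * (star (s (m' * a')) * s (m' * a')) := by noncomm_ring
    rw [hiso2, hisom, mul_one] at h2
    exact h2.symm
  have hzw : z * star z = 1 := by
    have hzw1 : z * algebraMap ℂ A c⁻¹ = 1 := by
      rw [hzdef, ← map_mul, mul_inv_cancel₀ hc0, map_one]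
    have hsw : star z = algebraMap ℂ A c⁻¹ := by
      calc star z = star z * (z * algebraMap ℂ A c⁻¹) := by rw [hzw1, mul_one]
        _ = (star z * z) * algebraMap ℂ A c⁻¹ := by noncomm_ring
        _ = algebraMap ℂ A c⁻¹ := by rw [hzz, one_mul]
    rw [hsw]; exact hzw1
  have hfin : s m' * (s a' * star (s a')) * star (s m') = (s m' * s a') * star (s m' * s a') := by
    rw [star_mul]; noncomm_ring
  rw [hfin, h1, star_mul]
  calc z * s (m' * a') * (star (s (m' * a')) * star z)
      = z * (s (m' * a') * star (s (m' * a'))) * star z := by noncomm_ring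
    _ = (s (m' * a') * star (s (m' * a'))) * z * star z := by
        rw [hzc (s (m' * a') * star (s (m' * a')))]
    _ = s (m' * a') * star (s (m' * a')) := by rw [mul_assoc, hzw, mul_one]

set_option maxHeartbeats 1000000 in
theorem decomp_lemma {A : Type*} [CStarAlgebra A] (U : unitary A) (s : ℕ+ → A) (ξ : ℕ+ → ℕ+ → ℝ)
    (hisom : ∀ m, star (s m) * s m = 1)
    (hQX1 : ∀ m n, s m * s n = Complex.exp (Complex.I * (ξ m n : ℂ)) • s (m * n))
    (hQX2 : ∀ (m : ℕ+) (l : ℤ), s m * ((U ^ l : unitary A) : A) =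
      ((U ^ ((m : ℤ) * l) : unitary A) : A) * s m)
    (hQX3 : ∀ m : ℕ+, ∑ k ∈ Finset.range m,
      ((U ^ (k : ℤ) : unitary A) : A) * (s m * star (s m)) * ((U ^ (-(k : ℤ)) : unitary A) : A) = 1)
    (m' a' : ℕ+) :
    s m' * star (s m') = ∑ k ∈ Finset.range (a' : ℕ),
      ((U ^ ((m' : ℤ) * k) : unitary A) : A) * (s (m' * a') * star (s (m' * a'))) *
        ((U ^ (-((m' : ℤ) * k)) : unitary A) : A) := by
  have key : ∀ k : ℕ,
      s m' * (((U ^ (k : ℤ) : unitary A) : A) * (s a' * star (s a')) *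
        ((U ^ (-(k : ℤ)) : unitary A) : A)) * star (s m')
      = ((U ^ ((m' : ℤ) * k) : unitary A) : A) * (s (m' * a') * star (s (m' * a'))) *
        ((U ^ (-((m' : ℤ) * k)) : unitary A) : A) := by
    intro k
    have h2 : s m' * ((U ^ (k : ℤ) : unitary A) : A)
        = ((U ^ ((m' : ℤ) * k) : unitary A) : A) * s m' := hQX2 m' (k : ℤ)
    have h2s : ((U ^ (-(k : ℤ)) : unitary A) : A) * star (s m')
        = star (s m') * ((U ^ (-((m' : ℤ) * k)) : unitary A) : A) := by
      have h3 := congrArg star h2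
      rwa [star_mul, star_mul, uz_star, uz_star] at h3
    calc s m' * (((U ^ (k : ℤ) : unitary A) : A) * (s a' * star (s a')) *
          ((U ^ (-(k : ℤ)) : unitary A) : A)) * star (s m')
        = (s m' * ((U ^ (k : ℤ) : unitary A) : A)) * (s a' * star (s a')) *
          (((U ^ (-(k : ℤ)) : unitary A) : A) * star (s m')) := by noncomm_ring
      _ = (((U ^ ((m' : ℤ) * k) : unitary A) : A) * s m') * (s a' * star (s a')) *
          (star (s m') * ((U ^ (-((m' : ℤ) * k)) : unitary A) : A)) := by rw [h2, h2s]
      _ = ((U ^ ((m' : ℤ) * k) : unitary A) : A) * (s m' * (s a' * star (s a')) * star (s m')) *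
          ((U ^ (-((m' : ℤ) * k)) : unitary A) : A) := by noncomm_ring
      _ = ((U ^ ((m' : ℤ) * k) : unitary A) : A) * (s (m' * a') * star (s (m' * a'))) *
          ((U ^ (-((m' : ℤ) * k)) : unitary A) : A) := by
            rw [conj_lemma s ξ hisom hQX1 m' a']
  calc s m' * star (s m') = s m' * 1 * star (s m') := by rw [mul_one]
    _ = s m' * (∑ k ∈ Finset.range (a' : ℕ),
        ((U ^ (k : ℤ) : unitary A) : A) * (s a' * star (s a')) *
          ((U ^ (-(k : ℤ)) : unitary A) : A)) * star (s m') := by rw [hQX3 a']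
    _ = ∑ k ∈ Finset.range (a' : ℕ),
        s m' * (((U ^ (k : ℤ) : unitary A) : A) * (s a' * star (s a')) *
          ((U ^ (-(k : ℤ)) : unitary A) : A)) * star (s m') := by
        rw [Finset.mul_sum, Finset.sum_mul]
    _ = ∑ k ∈ Finset.range (a' : ℕ),
        ((U ^ ((m' : ℤ) * k) : unitary A) : A) * (s (m' * a') * star (s (m' * a'))) *
          ((U ^ (-((m' : ℤ) * k)) : unitary A) : A) :=
        Finset.sum_congr rfl (fun k _ => key k)
set_option maxHeartbeats 1000000 in
lemma sum_proj_orthog {A : Type*} [CStarAlgebra A] {N : ℕ} (p : ℕ → A)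
    (hstar : ∀ k, star (p k) = p k) (hidem : ∀ k, p k * p k = p k)
    (hsum : ∑ k ∈ Finset.range N, p k = 1) :
    ∀ i < N, ∀ j < N, i ≠ j → p i * p j = 0 := by
  letI : PartialOrder A := CStarAlgebra.spectralOrder A
  haveI : StarOrderedRing A := CStarAlgebra.spectralOrderedRing A
  intro i hi j hj hij
  have hterm : ∀ k, p i * p k * p i = star (p k * p i) * (p k * p i) := by
    intro k
    rw [star_mul, hstar, hstar]
    calc p i * p k * p i = p i * (p k * p k) * p i := by rw [hidem]
      _ = p i * p k * (p k * p i) := by noncomm_ring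
  have h1 : ∑ k ∈ Finset.range N, p i * p k * p i = p i := by
    rw [← Finset.sum_mul, ← Finset.mul_sum, hsum, mul_one, hidem]
  have h2 : ∑ k ∈ (Finset.range N).erase i, p i * p k * p i = 0 := by
    have h3 := Finset.sum_erase_add (Finset.range N) (fun k => p i * p k * p i)
      (Finset.mem_range.mpr hi)
    have h4 : p i * p i * p i = p i := by rw [hidem, hidem]
    rw [h4, h1] at h3
    have h5 : (∑ k ∈ (Finset.range N).erase i, p i * p k * p i) + p i = 0 + p i := by
      rw [h3, zero_add]
    exact add_right_cancel h5
  have hnn : ∀ k ∈ (Finset.range N).erase i, 0 ≤ p i * p k * p i := by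
    intro k _
    rw [hterm k]
    exact star_mul_self_nonneg _
  have hz := (Finset.sum_eq_zero_iff_of_nonneg hnn).mp h2 j
    (Finset.mem_erase.mpr ⟨Ne.symm hij, Finset.mem_range.mpr hj⟩)
  have hz2 : star (p j * p i) * (p j * p i) = 0 := by rw [← hterm j]; exact hz
  have hz3 : p j * p i = 0 := (CStarRing.star_mul_self_eq_zero_iff _).mp hz2
  have hz4 := congrArg star hz3
  rwa [star_mul, hstar, hstar, star_zero] at hz4

set_option maxHeartbeats 4000000 in
theorem main_aux {A : Type*} [CStarAlgebra A] (U : unitary A) (s : ℕ+ → A) (ξ : ℕ+ → ℕ+ → ℝ)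
    (hisom : ∀ m, star (s m) * s m = 1)
    (hQX1 : ∀ m n, s m * s n = Complex.exp (Complex.I * (ξ m n : ℂ)) • s (m * n))
    (hQX2 : ∀ (m : ℕ+) (l : ℤ), s m * ((U ^ l : unitary A) : A) =
      ((U ^ ((m : ℤ) * l) : unitary A) : A) * s m)
    (hQX3 : ∀ m : ℕ+, ∑ k ∈ Finset.range m,
      ((U ^ (k : ℤ) : unitary A) : A) * (s m * star (s m)) * ((U ^ (-(k : ℤ)) : unitary A) : A) = 1)
    (m n : ℕ+) :
    (s m * star (s m)) * (s n * star (s n)) = s (m.lcm n) * star (s (m.lcm n)) := by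
  obtain ⟨a, ha⟩ := PNat.dvd_lcm_left m n
  obtain ⟨b, hb⟩ := PNat.dvd_lcm_right m n
  set L : ℕ+ := m.lcm n with hL
  set P : A := s L * star (s L) with hP
  have hPstar : star P = P := by rw [hP, star_mul, star_star]
  have hPP : P * P = P := by
    rw [hP, mul_assoc, ← mul_assoc (star (s L)) (s L) (star (s L)), hisom, one_mul]
  set p : ℕ → A := fun k =>
    ((U ^ (k : ℤ) : unitary A) : A) * P * ((U ^ (-(k : ℤ)) : unitary A) : A) with hp
  clear_value p
  clear_value P
  have hpstar : ∀ k, star (p k) = p k := by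
    intro k
    simp only [hp]
    rw [star_mul, star_mul, uz_star, uz_star, hPstar, neg_neg, mul_assoc]
  have hpidem : ∀ k, p k * p k = p k := by
    intro k
    simp only [hp]
    calc ((U ^ (k : ℤ) : unitary A) : A) * P * ((U ^ (-(k : ℤ)) : unitary A) : A) *
          (((U ^ (k : ℤ) : unitary A) : A) * P * ((U ^ (-(k : ℤ)) : unitary A) : A))
        = ((U ^ (k : ℤ) : unitary A) : A) * P *
          (((U ^ (-(k : ℤ)) : unitary A) : A) * ((U ^ (k : ℤ) : unitary A) : A)) *
          P * ((U ^ (-(k : ℤ)) : unitary A) : A) := by noncomm_ring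
      _ = ((U ^ (k : ℤ) : unitary A) : A) * (P * P) * ((U ^ (-(k : ℤ)) : unitary A) : A) := by
          rw [uz_mul, neg_add_cancel, uz_zero, mul_one]; noncomm_ring
      _ = ((U ^ (k : ℤ) : unitary A) : A) * P * ((U ^ (-(k : ℤ)) : unitary A) : A) := by
          rw [hPP]
  have hpsum : ∑ k ∈ Finset.range (L : ℕ), p k = 1 := by
    have h := hQX3 L
    rw [← hP] at h
    simp only [hp]
    exact h
  have horth := sum_proj_orthog p hpstar hpidem hpsum
  have hPvP : ∀ d : ℤ, -(L : ℤ) < d → d < (L : ℤ) → d ≠ 0 →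
      P * ((U ^ d : unitary A) : A) * P = 0 := by
    have key : ∀ d' : ℕ, 0 < d' → d' < (L : ℕ) →
        P * ((U ^ (d' : ℤ) : unitary A) : A) * P = 0 := by
      intro d' hd1 hd2
      have h0 := horth 0 (L.pos) d' hd2 (by omega)
      have h1 : p 0 = P := by
        simp only [hp]
        simp [uz_zero]
      rw [h1, hp] at h0
      have h2 : P * ((U ^ (d' : ℤ) : unitary A) : A) * P
          = (P * (((U ^ (d' : ℤ) : unitary A) : A) * P * ((U ^ (-(d' : ℤ)) : unitary A) : A))) *
            ((U ^ (d' : ℤ) : unitary A) : A) := by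
        calc P * ((U ^ (d' : ℤ) : unitary A) : A) * P
            = P * (((U ^ (d' : ℤ) : unitary A) : A) * P *
              (((U ^ (-(d' : ℤ)) : unitary A) : A) * ((U ^ (d' : ℤ) : unitary A) : A))) := by
              rw [uz_mul, neg_add_cancel, uz_zero, mul_one]; noncomm_ring
          _ = _ := by noncomm_ring
      rw [h2, h0, zero_mul]
    intro d hd1 hd2 hd0
    rcases lt_or_gt_of_ne hd0 with hneg | hpos
    · have hkey := key (-d).toNat (by omega) (by omega)
      have hcast : (((-d).toNat : ℤ)) = -d := Int.toNat_of_nonneg (by omega)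
      rw [hcast] at hkey
      have h3 := congrArg star hkey
      rw [star_mul, star_mul, hPstar, uz_star, neg_neg, star_zero] at h3
      rw [mul_assoc]
      exact h3
    · have hkey := key d.toNat (by omega) (by omega)
      have hcast : ((d.toNat : ℤ)) = d := Int.toNat_of_nonneg (by omega)
      rwa [hcast] at hkey
  -- decompositions of the two range projections
  have hm := decomp_lemma U s ξ hisom hQX1 hQX2 hQX3 m a
  have hn := decomp_lemma U s ξ hisom hQX1 hQX2 hQX3 n b
  rw [← ha, ← hP] at hm
  rw [← hb, ← hP] at hn
  have haN : (L : ℕ) = (m : ℕ) * (a : ℕ) := by rw [ha]; exact PNat.mul_coe m a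
  have hbN : (L : ℕ) = (n : ℕ) * (b : ℕ) := by rw [hb]; exact PNat.mul_coe n b
  have hLN : (L : ℕ) = Nat.lcm (m : ℕ) (n : ℕ) := by rw [hL]; exact PNat.lcm_coe m n
  have hterm : ∀ k ∈ Finset.range (a : ℕ), ∀ j ∈ Finset.range (b : ℕ),
      (((U ^ ((m : ℤ) * k) : unitary A) : A) * P * ((U ^ (-((m : ℤ) * k)) : unitary A) : A)) *
        (((U ^ ((n : ℤ) * j) : unitary A) : A) * P * ((U ^ (-((n : ℤ) * j)) : unitary A) : A))
      = if k = 0 ∧ j = 0 then P else 0 := by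
    intro k hk j hj
    by_cases h0 : k = 0 ∧ j = 0
    · obtain ⟨rfl, rfl⟩ := h0
      rw [if_pos ⟨rfl, rfl⟩]
      simp [uz_zero, hPP]
    · rw [if_neg h0]
      have hka : k < (a : ℕ) := Finset.mem_range.mp hk
      have hjb : j < (b : ℕ) := Finset.mem_range.mp hj
      have hbound1 : (m : ℕ) * k < (L : ℕ) := by
        rw [haN]; exact mul_lt_mul_of_pos_left hka m.pos
      have hbound2 : (n : ℕ) * j < (L : ℕ) := by
        rw [hbN]; exact mul_lt_mul_of_pos_left hjb n.pos
      have hd0 : -((m : ℤ) * k) + (n : ℤ) * j ≠ 0 := by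
        intro heq
        have heq2 : (m : ℕ) * k = (n : ℕ) * j := by
          have : ((m : ℕ) * k : ℤ) = ((n : ℕ) * j : ℤ) := by push_cast; omega
          exact_mod_cast this
        have hdvd : Nat.lcm (m : ℕ) (n : ℕ) ∣ (m : ℕ) * k :=
          Nat.lcm_dvd ⟨k, rfl⟩ ⟨j, heq2⟩
        rw [← hLN] at hdvd
        have hz : (m : ℕ) * k = 0 := Nat.eq_zero_of_dvd_of_lt hdvd hbound1
        have hk0 : k = 0 := by
          rcases Nat.mul_eq_zero.mp hz with h | h
          · exact absurd h (by have := m.pos; omega)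
          · exact h
        have hz2 : (n : ℕ) * j = 0 := by rw [← heq2]; exact hz
        have hj0 : j = 0 := by
          rcases Nat.mul_eq_zero.mp hz2 with h | h
          · exact absurd h (by have := n.pos; omega)
          · exact h
        exact h0 ⟨hk0, hj0⟩
      have hb1 : -((L : ℕ) : ℤ) < -((m : ℤ) * k) + (n : ℤ) * j := by
        have h1 : ((m : ℕ) * k : ℤ) < ((L : ℕ) : ℤ) := by exact_mod_cast hbound1
        have h2 : (0 : ℤ) ≤ ((n : ℕ) * j : ℤ) := by positivity
        push_cast at h1 h2 ⊢
        omega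
      have hb2 : -((m : ℤ) * k) + (n : ℤ) * j < ((L : ℕ) : ℤ) := by
        have h1 : ((n : ℕ) * j : ℤ) < ((L : ℕ) : ℤ) := by exact_mod_cast hbound2
        have h2 : (0 : ℤ) ≤ ((m : ℕ) * k : ℤ) := by positivity
        push_cast at h1 h2 ⊢
        omega
      have h5 := hPvP (-((m : ℤ) * k) + (n : ℤ) * j) hb1 hb2 hd0
      calc (((U ^ ((m : ℤ) * k) : unitary A) : A) * P * ((U ^ (-((m : ℤ) * k)) : unitary A) : A)) *
            (((U ^ ((n : ℤ) * j) : unitary A) : A) * P * ((U ^ (-((n : ℤ) * j)) : unitary A) : A))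
          = ((U ^ ((m : ℤ) * k) : unitary A) : A) *
            (P * (((U ^ (-((m : ℤ) * k)) : unitary A) : A) * ((U ^ ((n : ℤ) * j) : unitary A) : A)) * P) *
            ((U ^ (-((n : ℤ) * j)) : unitary A) : A) := by noncomm_ring
        _ = ((U ^ ((m : ℤ) * k) : unitary A) : A) *
            (P * ((U ^ (-((m : ℤ) * k) + (n : ℤ) * j) : unitary A) : A) * P) *
            ((U ^ (-((n : ℤ) * j)) : unitary A) : A) := by rw [uz_mul]
        _ = 0 := by rw [h5, mul_zero, zero_mul]
  rw [hm, hn, Finset.sum_mul_sum]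
  have hstep := Finset.sum_congr (rfl : Finset.range (a : ℕ) = Finset.range (a : ℕ))
    (fun k hk => Finset.sum_congr (rfl : Finset.range (b : ℕ) = Finset.range (b : ℕ))
      (fun j hj => hterm k hk j hj))
  rw [hstep]
  have hib : (0 : ℕ) ∈ Finset.range (b : ℕ) := Finset.mem_range.mpr b.pos
  have hia : (0 : ℕ) ∈ Finset.range (a : ℕ) := Finset.mem_range.mpr a.pos
  have inner : ∀ k, (∑ j ∈ Finset.range (b : ℕ), if k = 0 ∧ j = 0 then P else 0)
      = if k = 0 then P else 0 := by
    intro k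
    by_cases hk0 : k = 0
    · subst hk0
      simp only [true_and]
      rw [Finset.sum_ite_eq' (Finset.range (b : ℕ)) 0 (fun _ => P), if_pos hib]
      simp
    · simp [hk0]
  rw [Finset.sum_congr (rfl : Finset.range (a : ℕ) = Finset.range (a : ℕ))
    (fun k _ => inner k),
    Finset.sum_ite_eq' (Finset.range (a : ℕ)) 0 (fun _ => P), if_pos hia]

/-- Under relations (QX1)–(QX3) of `Q_ℕ^ξ`, the range projections of the
isometries satisfy `s_m s_m* · s_n s_n* = s_{m∨n} s_{m∨n}*` where `m∨n = lcm(m,n)`. -/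
theorem twisted_QN_range_projections_lcm
    {A : Type*} [NormedRing A] [StarRing A] [CStarRing A] [CompleteSpace A]
    [NormedAlgebra ℂ A] (U : unitary A) (s : ℕ+ → A) (ξ : ℕ+ → ℕ+ → ℝ)
    (hisom : ∀ m, star (s m) * s m = 1)
    (hQX1 : ∀ m n, s m * s n = Complex.exp (Complex.I * (ξ m n : ℂ)) • s (m * n))
    (hQX2 : ∀ (m : ℕ+) (l : ℤ), s m * ((U ^ l : unitary A) : A) =
      ((U ^ ((m : ℤ) * l) : unitary A) : A) * s m)
    (hQX3 : ∀ m : ℕ+, ∑ k ∈ Finset.range m,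
      ((U ^ (k : ℤ) : unitary A) : A) * (s m * star (s m)) * ((U ^ (-(k : ℤ)) : unitary A) : A) = 1) :
    ∀ m n : ℕ+,
      (s m * star (s m)) * (s n * star (s n)) = s (m.lcm n) * star (s (m.lcm n)) := by
  intro m n
  set u : A := ((U ^ (1 : ℤ) : unitary A) : A) with hu
  have hustar : star u = ((U ^ (-1 : ℤ) : unitary A) : A) := by rw [hu]; exact uz_star U 1
  have hu1 : star u * u = 1 := by
    rw [hustar, hu, uz_mul]
    norm_num [uz_zero]
  have hsum2 : s 2 * star (s 2) + u * (s 2 * star (s 2)) * star u = 1 := by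
    have h := hQX3 2
    have h2 : ((2 : ℕ+) : ℕ) = 2 := rfl
    rw [h2, Finset.sum_range_succ, Finset.sum_range_succ, Finset.sum_range_zero, zero_add] at h
    rw [hu, hustar]
    norm_num [uz_zero] at h
    convert h using 3 <;> norm_num
  haveI : StarModule ℂ A := ⟨fun r x => by
    have hsm := starModule_of_relations u (s 2) hu1 (hisom 2) hsum2 r x
    rwa [starRingEnd_apply] at hsm⟩
  letI : CStarAlgebra A := { }
  exact main_aux U s ξ hisom hQX1 hQX2 hQX3 m n
end

section
/- The combinatorial heart of Lemma 5.2: for m,n ∈ ℕ× and k,l ∈ ℤ, the projection inequality u^k s_m s_m* u^{-k} ≤ u^l s_n s_n* u^{-l} holds if and only if for every j ∈ {0,…,n−1} there exists j' ∈ {0,…,m−1} such that k + jm ≡ l + j'n (mod mn). Moreover this congruence condition is equivalent to: n divides m and n divides k − l. -/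
/-- Combinatorial heart of Lemma 5.2. For positive integers `m, n` and
integers `k, l`: for every `j ∈ {0,…,n−1}` there exists `j' ∈ {0,…,m−1}` with
`k + jm ≡ l + j'n (mod mn)`, if and only if `n` divides both `m` and `k − l`. -/
theorem projection_inequality_congruence (m n : ℕ) (hm : 0 < m) (hn : 0 < n)
    (k l : ℤ) :
    (∀ j : ℕ, j < n → ∃ j' : ℕ, j' < m ∧
        k + (j : ℤ) * m ≡ l + (j' : ℤ) * n [ZMOD (m * n)]) ↔
      (n : ℤ) ∣ (m : ℤ) ∧ (n : ℤ) ∣ (k - l) := by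
  constructor
  · intro h
    obtain ⟨j0, hj0, h0⟩ := h 0 hn
    rw [Int.ModEq] at h0
    have h0' : ((m : ℤ) * n) ∣ (l + (j0 : ℤ) * n) - (k + 0 * m) :=
      Int.ModEq.dvd h0
    obtain ⟨t0, ht0⟩ := h0'
    have hkl : (n : ℤ) ∣ (k - l) := by
      refine ⟨j0 - m * t0, ?_⟩
      push_cast at ht0 ⊢
      linarith [ht0]
    refine ⟨?_, hkl⟩
    rcases Nat.lt_or_ge 1 n with h1n | h1n
    · obtain ⟨j1, hj1, h1⟩ := h 1 h1n
      have h1' : ((m : ℤ) * n) ∣ (l + (j1 : ℤ) * n) - (k + 1 * m) :=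
        Int.ModEq.dvd h1
      obtain ⟨t1, ht1⟩ := h1'
      refine ⟨(j1 : ℤ) - j0 - m * t1 + m * t0, ?_⟩
      ring_nf
      ring_nf at ht0 ht1
      linarith [ht0, ht1]
    · interval_cases n
      exact one_dvd _
  · rintro ⟨⟨a, ha⟩, ⟨b, hb⟩⟩ j hj
    refine ⟨((b + j * a) % m).toNat, ?_, ?_⟩
    · have hmpos : (0 : ℤ) < m := by exact_mod_cast hm
      have := Int.emod_lt_of_pos (b + j * a) hmpos
      omega
    · have hmpos : (0 : ℤ) < m := by exact_mod_cast hm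
      have hnn := Int.emod_nonneg (b + j * a) (ne_of_gt hmpos)
      have htn : (((b + j * a) % m).toNat : ℤ) = (b + j * a) % m :=
        Int.toNat_of_nonneg hnn
      set r : ℤ := (b + j * a) % m with hr
      have hdiv : (m : ℤ) * ((b + j * a) / m) + r = b + j * a := Int.mul_ediv_add_emod _ _
      rw [Int.modEq_iff_dvd]
      refine ⟨-((b + j * a) / m), ?_⟩
      rw [htn]
      have : (m : ℤ) = n * a := ha
      nlinarith [hdiv]
end
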